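/- Let f(x) be a 1-periodic function in ℝ^d (f(x+z) = f(x) for all z ∈ ℤ^d) such that f ∈ L²(Y). Then for any u ∈ L²(ℝ^d), ‖f^ε S_ε u‖_{L²(ℝ^d)} ≤ ‖f‖_{L²(Y)} ‖u‖_{L²(ℝ^d)}, where f^ε(x) = f(x/ε). -/

import Mathlib

open MeasureTheory Real Set Metric Filter
open scoped ENNReal NNReal Topology

noncomputable section

/-- Euclidean space `ℝ^d`. -/
abbrev Rd (d : ℕ) : Type := EuclideanSpace ℝ (Fin d)

variable {d : ℕ}

/-- The `i`-th partial derivative of a scalar function on `ℝ^d`. -/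
def pd (i : Fin d) (u : Rd d → ℝ) (x : Rd d) : ℝ :=
  fderiv ℝ u x (EuclideanSpace.single i 1)

/-- The periodicity cell `Y = [0,1)^d`. -/
def cellY (d : ℕ) : Set (Rd d) := {y | ∀ i, y i ∈ Ico (0 : ℝ) 1}

/-- `1`-periodicity of a function on `ℝ^d`. -/
def ZPeriodic (u : Rd d → ℝ) : Prop :=
  ∀ (y : Rd d) (z : Fin d → ℤ),
    u (y + (WithLp.equiv 2 (Fin d → ℝ)).symm fun i => (z i : ℝ)) = u y

/-- `L²(Ω)` norm of a scalar function. -/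
def L2 (Ω : Set (Rd d)) (u : Rd d → ℝ) : ℝ := (∫ x in Ω, u x ^ 2) ^ (1/2 : ℝ)

/-- `L²(Ω)` norm of a vector-valued function. -/
def L2V (Ω : Set (Rd d)) (u : Rd d → Fin d → ℝ) : ℝ :=
  (∫ x in Ω, ∑ α, u x α ^ 2) ^ (1/2 : ℝ)

/-- `L²(Ω)` norm of a matrix-valued function. -/
def L2M (Ω : Set (Rd d)) (U : Rd d → Fin d → Fin d → ℝ) : ℝ :=
  (∫ x in Ω, ∑ α, ∑ i, U x α i ^ 2) ^ (1/2 : ℝ)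

/-- `L²(Ω)` norm of a 3-tensor-valued function. -/
def L2T (Ω : Set (Rd d)) (U : Rd d → Fin d → Fin d → Fin d → ℝ) : ℝ :=
  (∫ x in Ω, ∑ α, ∑ i, ∑ j, U x α i j ^ 2) ^ (1/2 : ℝ)

/-- `H¹(Ω)` norm of a scalar function with (weak) gradient `Du`. -/
def H1n (Ω : Set (Rd d)) (u : Rd d → ℝ) (Du : Rd d → Fin d → ℝ) : ℝ :=
  (L2 Ω u ^ 2 + L2V Ω Du ^ 2) ^ (1/2 : ℝ)

/-- `H¹(Ω)` norm of a vector field with (weak) gradient `Du`. -/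
def H1V (Ω : Set (Rd d)) (u : Rd d → Fin d → ℝ) (Du : Rd d → Fin d → Fin d → ℝ) : ℝ :=
  (L2V Ω u ^ 2 + L2M Ω Du ^ 2) ^ (1/2 : ℝ)

/-- `H²(Ω)` norm of a vector field with (weak) derivatives `Du`, `D2u`. -/
def H2V (Ω : Set (Rd d)) (u : Rd d → Fin d → ℝ) (Du : Rd d → Fin d → Fin d → ℝ)
    (D2u : Rd d → Fin d → Fin d → Fin d → ℝ) : ℝ :=
  (L2V Ω u ^ 2 + L2M Ω Du ^ 2 + L2T Ω D2u ^ 2) ^ (1/2 : ℝ)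

/-- Test functions: smooth and compactly supported inside `Ω`. -/
def IsTestOn (Ω : Set (Rd d)) (φ : Rd d → ℝ) : Prop :=
  ContDiff ℝ (⊤ : ℕ∞) φ ∧ HasCompactSupport φ ∧ tsupport φ ⊆ Ω

/-- `du` is the `i`-th weak partial derivative of `u` on `Ω`. -/
def IsWeakDeriv (Ω : Set (Rd d)) (i : Fin d) (u du : Rd d → ℝ) : Prop :=
  ∀ φ : Rd d → ℝ, IsTestOn Ω φ →
    ∫ x in Ω, u x * pd i φ x = - ∫ x in Ω, du x * φ x

/-- `u ∈ H¹(Ω)` with weak gradient `Du`. -/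
def MemH1 (Ω : Set (Rd d)) (u : Rd d → ℝ) (Du : Rd d → Fin d → ℝ) : Prop :=
  MemLp u 2 (volume.restrict Ω) ∧ (∀ i, MemLp (fun x => Du x i) 2 (volume.restrict Ω)) ∧
    ∀ i, IsWeakDeriv Ω i u fun x => Du x i

/-- `u ∈ H¹(Ω; ℝ^d)` with weak gradient `Du` (`Du x α i = ∂ᵢ u^α (x)`). -/
def MemH1V (Ω : Set (Rd d)) (u : Rd d → Fin d → ℝ) (Du : Rd d → Fin d → Fin d → ℝ) : Prop :=
  ∀ α, MemH1 Ω (fun x => u x α) fun x => Du x α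

/-- `u ∈ H²(Ω; ℝ^d)` with weak derivatives `Du`, `D2u` (`D2u x α i j = ∂ⱼ ∂ᵢ u^α (x)`). -/
def MemH2V (Ω : Set (Rd d)) (u : Rd d → Fin d → ℝ) (Du : Rd d → Fin d → Fin d → ℝ)
    (D2u : Rd d → Fin d → Fin d → Fin d → ℝ) : Prop :=
  MemH1V Ω u Du ∧ (∀ α i j, MemLp (fun x => D2u x α i j) 2 (volume.restrict Ω)) ∧
    ∀ α i j, IsWeakDeriv Ω j (fun x => Du x α i) fun x => D2u x α i j

/-- `u ∈ L²(Ω; ℝ^d)`. -/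
def MemL2V (Ω : Set (Rd d)) (u : Rd d → Fin d → ℝ) : Prop :=
  ∀ α, MemLp (fun x => u x α) 2 (volume.restrict Ω)

/-- A coefficient tensor `a i j α β : ℝ^d → ℝ`. -/
abbrev Coeff (d : ℕ) := Fin d → Fin d → Fin d → Fin d → Rd d → ℝ

/-- The coefficient tensor is (bounded) measurable and satisfies the ellipticity condition
`μ|ξ|² ≤ aᵢⱼ^{αβ} ξᵢ^α ξⱼ^β ≤ μ⁻¹ |ξ|²`. -/
def Elliptic (μ : ℝ) (a : Coeff d) : Prop :=
  (∀ i j α β, Measurable (a i j α β)) ∧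
    ∀ (y : Rd d) (ξ : Fin d → Fin d → ℝ),
      μ * (∑ i, ∑ α, ξ i α ^ 2) ≤ (∑ i, ∑ j, ∑ α, ∑ β, a i j α β y * ξ i α * ξ j β) ∧
      (∑ i, ∑ j, ∑ α, ∑ β, a i j α β y * ξ i α * ξ j β) ≤ μ⁻¹ * ∑ i, ∑ α, ξ i α ^ 2

/-- 1-periodicity of the coefficient tensor. -/
def CoeffPeriodic (a : Coeff d) : Prop := ∀ i j α β, ZPeriodic (a i j α β)

/-- The adjoint coefficient tensor `A*`. -/
def adjCoeff (a : Coeff d) : Coeff d := fun i j α β y => a j i β α y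

/-- The rescaled coefficients `A(x/ε)`. -/
def scaleCoeff (ε : ℝ) (a : Coeff d) : Coeff d := fun i j α β x => a i j α β (ε⁻¹ • x)

/-- The Steklov smoothing operator `(S_ε u)(x) = ∫_Y u(x - εz) dz`. -/
def stek (ε : ℝ) (u : Rd d → ℝ) (x : Rd d) : ℝ := ∫ z in cellY d, u (x - ε • z)

/-- Surface measure: the `(d-1)`-dimensional Hausdorff measure. -/
def surf (d : ℕ) : Measure (Rd d) := Measure.hausdorffMeasure ((d : ℝ) - 1)

/-- A bounded domain whose boundary is locally the graph of a function of class `P`. -/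
def IsGraphDomain (Ω : Set (Rd d)) (P : (Rd d → ℝ) → Prop) : Prop :=
  IsOpen Ω ∧ Bornology.IsBounded Ω ∧ Ω.Nonempty ∧
    ∀ x ∈ frontier Ω, ∃ r > (0 : ℝ), ∃ ν : Rd d, ‖ν‖ = 1 ∧ ∃ ψ : Rd d → ℝ, P ψ ∧
      ∀ y ∈ ball x r, (y ∈ Ω ↔ ψ (y - (inner ℝ y ν : ℝ) • ν) < (inner ℝ y ν : ℝ))

/-- Bounded Lipschitz domain. -/
def IsLipschitzDomain (Ω : Set (Rd d)) : Prop :=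
  IsGraphDomain Ω fun ψ => ∃ L : ℝ≥0, LipschitzWith L ψ

/-- Bounded `C¹` domain. -/
def IsC1Domain (Ω : Set (Rd d)) : Prop := IsGraphDomain Ω fun ψ => ContDiff ℝ 1 ψ

/-- Bounded `C^{1,1}` domain. -/
def IsC11Domain (Ω : Set (Rd d)) : Prop :=
  IsGraphDomain Ω fun ψ => ContDiff ℝ 1 ψ ∧ ∃ L : ℝ≥0, LipschitzWith L (fderiv ℝ ψ)

/-- Inner boundary layer `Ω_r = {x ∈ Ω : dist(x, ∂Ω) ≤ r}`. -/
def innerNbhd (Ω : Set (Rd d)) (r : ℝ) : Set (Rd d) := {x ∈ Ω | infDist x (frontier Ω) ≤ r}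

/-- Boundary layer `(∂Ω)_r = {x : dist(x, ∂Ω) ≤ r}`. -/
def bdryNbhd (Ω : Set (Rd d)) (r : ℝ) : Set (Rd d) := {x | infDist x (frontier Ω) ≤ r}

/-- The correctors `(χ_j^β, π_j^β)` for the Stokes system: 1-periodic solutions of the
cell problem `L₁(χ_j^β + P_j^β) + ∇π_j^β = 0`, `div(χ_j^β) = 0`, with zero mean over `Y`.
Here `χ j β y γ = χ_j^{γβ}(y)` and `Dχ j β y γ k = ∂_k χ_j^{γβ}(y)`. -/
structure Corrector (a : Coeff d) (χ : Fin d → Fin d → Rd d → Fin d → ℝ)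
    (Dχ : Fin d → Fin d → Rd d → Fin d → Fin d → ℝ)
    (pic : Fin d → Fin d → Rd d → ℝ) : Prop where
  periodic_χ : ∀ j β γ, ZPeriodic fun y => χ j β y γ
  periodic_Dχ : ∀ j β γ k, ZPeriodic fun y => Dχ j β y γ k
  periodic_π : ∀ j β, ZPeriodic (pic j β)
  mem_χ : ∀ j β γ, MemLp (fun y => χ j β y γ) 2 (volume.restrict (cellY d))
  mem_Dχ : ∀ j β γ k, MemLp (fun y => Dχ j β y γ k) 2 (volume.restrict (cellY d))
  mem_π : ∀ j β, MemLp (pic j β) 2 (volume.restrict (cellY d))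
  weak_deriv : ∀ j β γ k, IsWeakDeriv univ k (fun y => χ j β y γ) fun y => Dχ j β y γ k
  div_free : ∀ j β, ∀ᵐ y ∂(volume : Measure (Rd d)), (∑ γ, Dχ j β y γ γ) = 0
  mean_χ : ∀ j β γ, (∫ y in cellY d, χ j β y γ) = 0
  mean_π : ∀ j β, (∫ y in cellY d, pic j β y) = 0
  cell_eq : ∀ (j β : Fin d) (φ : Rd d → Fin d → ℝ),
    (∀ α, ContDiff ℝ (⊤ : ℕ∞) fun y => φ y α) → (∀ α, HasCompactSupport fun y => φ y α) →
    (∫ y : Rd d, ∑ i, ∑ k, ∑ α, ∑ γ,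
        a i k α γ y * (Dχ j β y γ k + if k = j ∧ γ = β then 1 else 0) * pd i (fun z => φ z α) y)
      = ∫ y : Rd d, pic j β y * ∑ α, pd α (fun z => φ z α) y

/-- The homogenized coefficient tensor `Â`. -/
def Ahat (a : Coeff d) (Dχ : Fin d → Fin d → Rd d → Fin d → Fin d → ℝ) : Coeff d :=
  fun i j α β _ => ∫ y in cellY d, (a i j α β y + ∑ k, ∑ γ, a i k α γ y * Dχ j β y γ k)

/-- The tensor `b_{ij}^{αβ} = a_{ij}^{αβ} + a_{ik}^{αγ} ∂_k χ_j^{γβ} - â_{ij}^{αβ}`. -/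
def bTensor (a : Coeff d) (Dχ : Fin d → Fin d → Rd d → Fin d → Fin d → ℝ) : Coeff d :=
  fun i j α β y =>
    a i j α β y + (∑ k, ∑ γ, a i k α γ y * Dχ j β y γ k) - Ahat a Dχ i j α β y

/-- Weak solution of the Neumann problem for the Stokes system with coefficient tensor `A`
(already evaluated at the relevant scale): `-div(A∇u) + ∇p = F`, `div(u) = g` in `Ω`,
`∂u/∂ν - p n = f` on `∂Ω`. -/
def IsNeumannSol (Ω : Set (Rd d)) (A : Coeff d) (u : Rd d → Fin d → ℝ)
    (Du : Rd d → Fin d → Fin d → ℝ) (p : Rd d → ℝ) (F : Rd d → Fin d → ℝ)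
    (g : Rd d → ℝ) (f : Rd d → Fin d → ℝ) : Prop :=
  MemH1V Ω u Du ∧ MemLp p 2 (volume.restrict Ω) ∧
    (∀ᵐ x ∂volume.restrict Ω, (∑ α, Du x α α) = g x) ∧
    ∀ φ : Rd d → Fin d → ℝ, (∀ α, ContDiff ℝ (⊤ : ℕ∞) fun x => φ x α) →
      ((∫ x in Ω, ∑ i, ∑ j, ∑ α, ∑ β, A i j α β x * Du x β j * pd i (fun y => φ y α) x) -
          ∫ x in Ω, p x * ∑ α, pd α (fun y => φ y α) x) =
        (∫ x in Ω, ∑ α, F x α * φ x α) +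
          ∫ x in frontier Ω, (∑ α, f x α * φ x α) ∂(surf d)

/-- The compatibility condition `∫_Ω F + ∫_{∂Ω} f = 0`. -/
def Compat (Ω : Set (Rd d)) (F f : Rd d → Fin d → ℝ) : Prop :=
  ∀ α, (∫ x in Ω, F x α) + (∫ x in frontier Ω, f x α ∂(surf d)) = 0

/-- All the data of the homogenization problem: coefficients, correctors, Neumann data and
the solutions of the `ε`-problem and the homogenized problem. -/
structure SolData (d : ℕ) where
  a : Coeff d
  χ : Fin d → Fin d → Rd d → Fin d → ℝ
  Dχ : Fin d → Fin d → Rd d → Fin d → Fin d → ℝ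
  pic : Fin d → Fin d → Rd d → ℝ
  F : Rd d → Fin d → ℝ
  g : Rd d → ℝ
  Dg : Rd d → Fin d → ℝ
  f : Rd d → Fin d → ℝ
  uε : Rd d → Fin d → ℝ
  Duε : Rd d → Fin d → Fin d → ℝ
  pε : Rd d → ℝ
  u0 : Rd d → Fin d → ℝ
  Du0 : Rd d → Fin d → Fin d → ℝ
  D2u0 : Rd d → Fin d → Fin d → Fin d → ℝ
  p0 : Rd d → ℝ

/-- Validity of the data: `A` is elliptic and periodic, `(χ, π)` are the correctors,
`F ∈ L²(Ω;ℝ^d)`, `g ∈ H¹(Ω)`, `f ∈ L²(∂Ω;ℝ^d)` with the compatibility condition,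
`(uε, pε)` and `(u0, p0)` are weak solutions of the `ε`- and homogenized Neumann problems,
and `u0 ∈ H²(Ω;ℝ^d)`. -/
def SolData.Valid (S : SolData d) (Ω : Set (Rd d)) (μ ε : ℝ) : Prop :=
  Elliptic μ S.a ∧ CoeffPeriodic S.a ∧ Corrector S.a S.χ S.Dχ S.pic ∧
    MemL2V Ω S.F ∧ (∀ α, IntegrableOn (fun x => S.F x α) Ω) ∧
    MemH1 Ω S.g S.Dg ∧
    (∀ α, MemLp (fun x => S.f x α) 2 ((surf d).restrict (frontier Ω))) ∧
    (∀ α, Integrable (fun x => S.f x α) ((surf d).restrict (frontier Ω))) ∧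
    Compat Ω S.F S.f ∧
    IsNeumannSol Ω (scaleCoeff ε S.a) S.uε S.Duε S.pε S.F S.g S.f ∧
    IsNeumannSol Ω (Ahat S.a S.Dχ) S.u0 S.Du0 S.p0 S.F S.g S.f ∧
    MemH2V Ω S.u0 S.Du0 S.D2u0

/-- An `H²(ℝ^d)` extension `ũ₀` of `u₀` together with its weak derivatives. -/
structure ExtData (d : ℕ) where
  ut : Rd d → Fin d → ℝ
  Dut : Rd d → Fin d → Fin d → ℝ
  D2ut : Rd d → Fin d → Fin d → Fin d → ℝ

/-- `ũ₀` extends `u₀` and `‖ũ₀‖_{H²(ℝ^d)} ≤ C₀ ‖u₀‖_{H²(Ω)}`. -/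
def ExtData.Valid (E : ExtData d) (Ω : Set (Rd d)) (S : SolData d) (C₀ : ℝ) : Prop :=
  MemH2V univ E.ut E.Dut E.D2ut ∧
    (∀ᵐ x ∂volume.restrict Ω, ∀ α, E.ut x α = S.u0 x α) ∧
    (∀ᵐ x ∂volume.restrict Ω, ∀ α i, E.Dut x α i = S.Du0 x α i) ∧
    (∀ᵐ x ∂volume.restrict Ω, ∀ α i j, E.D2ut x α i j = S.D2u0 x α i j) ∧
    H2V univ E.ut E.Dut E.D2ut ≤ C₀ * H2V Ω S.u0 S.Du0 S.D2u0

/-- The corrector term `(χ^ε S_ε(∇ũ₀))^α`. -/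
def corrTerm (ε : ℝ) (χ : Fin d → Fin d → Rd d → Fin d → ℝ)
    (Dut : Rd d → Fin d → Fin d → ℝ) (x : Rd d) (α : Fin d) : ℝ :=
  ∑ j, ∑ β, χ j β (ε⁻¹ • x) α * stek ε (fun y => Dut y β j) x

/-- The gradient `∂_i (ε χ^ε S_ε(∇ũ₀))^α`. -/
def corrGrad (ε : ℝ) (χ : Fin d → Fin d → Rd d → Fin d → ℝ)
    (Dχ : Fin d → Fin d → Rd d → Fin d → Fin d → ℝ)
    (Dut : Rd d → Fin d → Fin d → ℝ) (D2ut : Rd d → Fin d → Fin d → Fin d → ℝ)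
    (x : Rd d) (α i : Fin d) : ℝ :=
  ∑ j, ∑ β, (Dχ j β (ε⁻¹ • x) α i * stek ε (fun y => Dut y β j) x
    + ε * χ j β (ε⁻¹ • x) α * stek ε (fun y => D2ut y β j i) x)

/-- `v_ε = u_ε - u₀ - ε χ^ε S_ε(∇ũ₀)`. -/
def vF (S : SolData d) (E : ExtData d) (ε : ℝ) : Rd d → Fin d → ℝ :=
  fun x α => S.uε x α - S.u0 x α - ε * corrTerm ε S.χ E.Dut x α

/-- The gradient of `v_ε`. -/
def DvF (S : SolData d) (E : ExtData d) (ε : ℝ) : Rd d → Fin d → Fin d → ℝ :=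
  fun x α i => S.Duε x α i - S.Du0 x α i - corrGrad ε S.χ S.Dχ E.Dut E.D2ut x α i

/-- `π^ε S_ε(∇ũ₀)`. -/
def piTerm (ε : ℝ) (pic : Fin d → Fin d → Rd d → ℝ)
    (Dut : Rd d → Fin d → Fin d → ℝ) (x : Rd d) : ℝ :=
  ∑ j, ∑ β, pic j β (ε⁻¹ • x) * stek ε (fun y => Dut y β j) x

/-- `q^ε S_ε(∇²ũ₀) = q_{ij}^β(x/ε) S_ε(∂²ũ₀^β/∂x_j∂x_i)`. -/
def qTerm (ε : ℝ) (q : Fin d → Fin d → Fin d → Rd d → ℝ)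
    (D2ut : Rd d → Fin d → Fin d → Fin d → ℝ) (x : Rd d) : ℝ :=
  ∑ i, ∑ j, ∑ β, q i j β (ε⁻¹ • x) * stek ε (fun y => D2ut y β i j) x

/-- The bilinear form `a_ε(u, v) = ∫_Ω A ∇u · ∇v`, in terms of the gradients. -/
def aForm (Ω : Set (Rd d)) (A : Coeff d) (DU Dφ : Rd d → Fin d → Fin d → ℝ) : ℝ :=
  ∫ x in Ω, ∑ i, ∑ j, ∑ α, ∑ β, A i j α β x * DU x β j * Dφ x α i

/-- The dual correctors `(Φ_{kij}^{αβ}, q_{ij}^β)` in `H¹_per(Y)`: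
`b_{ij}^{αβ} = ∂_k Φ_{kij}^{αβ} + ∂_α q_{ij}^β`, `Φ_{kij}^{αβ} = -Φ_{ikj}^{αβ}` and
`π_j^β = ∂_i q_{ij}^β`. -/
structure DualCorrector (a : Coeff d) (Dχ : Fin d → Fin d → Rd d → Fin d → Fin d → ℝ)
    (pic : Fin d → Fin d → Rd d → ℝ)
    (Φ : Fin d → Fin d → Fin d → Fin d → Fin d → Rd d → ℝ)
    (DΦ : Fin d → Fin d → Fin d → Fin d → Fin d → Rd d → Fin d → ℝ)
    (q : Fin d → Fin d → Fin d → Rd d → ℝ)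
    (Dq : Fin d → Fin d → Fin d → Rd d → Fin d → ℝ) : Prop where
  periodic_Φ : ∀ k i j α β, ZPeriodic (Φ k i j α β)
  periodic_q : ∀ i j β, ZPeriodic (q i j β)
  mem_Φ : ∀ k i j α β, MemLp (Φ k i j α β) 2 (volume.restrict (cellY d))
  mem_DΦ : ∀ k i j α β l, MemLp (fun y => DΦ k i j α β y l) 2 (volume.restrict (cellY d))
  mem_q : ∀ i j β, MemLp (q i j β) 2 (volume.restrict (cellY d))
  mem_Dq : ∀ i j β l, MemLp (fun y => Dq i j β y l) 2 (volume.restrict (cellY d))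
  weak_deriv_Φ : ∀ k i j α β l, IsWeakDeriv univ l (Φ k i j α β) fun y => DΦ k i j α β y l
  weak_deriv_q : ∀ i j β l, IsWeakDeriv univ l (q i j β) fun y => Dq i j β y l
  antisymm : ∀ k i j α β y, Φ k i j α β y = - Φ i k j α β y
  decomp : ∀ i j α β, ∀ᵐ y ∂(volume : Measure (Rd d)),
    bTensor a Dχ i j α β y = (∑ k, DΦ k i j α β y k) + Dq i j β y α
  pi_rel : ∀ j β, ∀ᵐ y ∂(volume : Measure (Rd d)), pic j β y = ∑ i, Dq i j β y i

/-- Smooth vector-valued functions. -/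
def smoothV (φ : Rd d → Fin d → ℝ) : Prop := ∀ α, ContDiff ℝ (⊤ : ℕ∞) fun x => φ x α

/-- The (pointwise) gradient of a smooth vector field. -/
def sgrad (φ : Rd d → Fin d → ℝ) : Rd d → Fin d → Fin d → ℝ :=
  fun x α i => pd i (fun y => φ y α) x

/-- `F ∈ H^{-1}(Ω; ℝ^d)` (as a function, via boundedness of the pairing). -/
def MemHminusOne (Ω : Set (Rd d)) (F : Rd d → Fin d → ℝ) : Prop :=
  (∀ α, IntegrableOn (fun x => F x α) Ω) ∧
    ∃ M : ℝ, ∀ φ : Rd d → Fin d → ℝ, smoothV φ →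
      (∀ α, HasCompactSupport fun x => φ x α) → (∀ α, tsupport (fun x => φ x α) ⊆ Ω) →
      |∫ x in Ω, ∑ α, F x α * φ x α| ≤ M * H1V Ω φ (sgrad φ)

/-- `f ∈ H^{-1/2}(∂Ω; ℝ^d)` (as a function, via boundedness of the pairing). -/
def MemHminusHalf (Ω : Set (Rd d)) (f : Rd d → Fin d → ℝ) : Prop :=
  (∀ α, Integrable (fun x => f x α) ((surf d).restrict (frontier Ω))) ∧
    ∃ M : ℝ, ∀ φ : Rd d → Fin d → ℝ, smoothV φ →
      |∫ x in frontier Ω, (∑ α, f x α * φ x α) ∂(surf d)| ≤ M * H1V Ω φ (sgrad φ)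

/-- The `H^{-1}(Ω)` norm, as the dual norm against smooth compactly supported functions. -/
def HminusOneNorm (Ω : Set (Rd d)) (F : Rd d → Fin d → ℝ) : ℝ :=
  sSup {r | ∃ φ : Rd d → Fin d → ℝ, smoothV φ ∧ (∀ α, HasCompactSupport fun x => φ x α) ∧
    (∀ α, tsupport (fun x => φ x α) ⊆ Ω) ∧ H1V Ω φ (sgrad φ) ≤ 1 ∧
    r = ∫ x in Ω, ∑ α, F x α * φ x α}

/-- The `H^{-1/2}(∂Ω)` norm, as the dual norm against (traces of) smooth functions. -/
def HminusHalfNorm (Ω : Set (Rd d)) (f : Rd d → Fin d → ℝ) : ℝ :=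
  sSup {r | ∃ φ : Rd d → Fin d → ℝ, smoothV φ ∧ H1V Ω φ (sgrad φ) ≤ 1 ∧
    r = ∫ x in frontier Ω, (∑ α, f x α * φ x α) ∂(surf d)}

lemma aux_cellY_eq (d : ℕ) : cellY d = ZSpan.fundamentalDomain (PiLp.basisFun 2 ℝ (Fin d)) := by
  ext x; simp [cellY, ZSpan.fundamentalDomain, PiLp.basisFun_repr]

lemma aux_volume_cellY (d : ℕ) : volume (cellY d) = 1 := by
  have h : cellY d = (MeasurableEquiv.toLp 2 (Fin d → ℝ)).symm ⁻¹'
      (univ.pi fun _ : Fin d => Ico (0:ℝ) 1) := by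
    ext x; simp [cellY]
  rw [h, MeasurePreserving.measure_preimage
    (EuclideanSpace.volume_preserving_symm_measurableEquiv_toLp (Fin d))
    ((MeasurableSet.univ_pi fun _ => measurableSet_Ico).nullMeasurableSet)]
  simp [volume_pi_pi]

lemma aux_periodic_setLIntegral (g : Rd d → ℝ≥0∞)
    (hper : ∀ (y : Rd d) (z : Fin d → ℤ),
      g (y + (WithLp.equiv 2 (Fin d → ℝ)).symm fun i => (z i : ℝ)) = g y)
    (c : Rd d) : ∫⁻ z in cellY d, g (c + z) = ∫⁻ z in cellY d, g z := by
  set b := PiLp.basisFun 2 ℝ (Fin d) with hb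
  set D := ZSpan.fundamentalDomain b with hD
  have h1 : IsAddFundamentalDomain (Submodule.span ℤ (Set.range b)) D volume :=
    ZSpan.isAddFundamentalDomain b volume
  have h2 : IsAddFundamentalDomain (Submodule.span ℤ (Set.range b)) ((fun y => y - c) ⁻¹' D) volume :=
    h1.preimage_of_equiv (measurePreserving_sub_right volume c).quasiMeasurePreserving
      Function.bijective_id
      (fun l x => by show (↑l + x) - c = ↑l + (x - c); exact add_sub_assoc _ _ _)
  have hinv : ∀ (l : Submodule.span ℤ (Set.range b)) (x : Rd d), g (l +ᵥ x) = g x := by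
    intro l x
    obtain ⟨z, hz⟩ := (Submodule.mem_span_range_iff_exists_fun ℤ).mp l.2
    have hl : (l : Rd d) = (WithLp.equiv 2 (Fin d → ℝ)).symm fun i => (z i : ℝ) := by
      rw [← hz]
      apply (WithLp.linearEquiv 2 ℝ (Fin d → ℝ)).injective
      rw [map_sum]
      funext j
      simp [b, PiLp.basisFun_apply, Finset.sum_apply, Pi.single_apply]
    show g ((l : Rd d) + x) = g x
    rw [hl, add_comm]; exact hper x z
  haveI : MeasurableVAdd (Submodule.span ℤ (Set.range ⇑b)) (Rd d) :=
    { measurable_const_vadd := fun l => (measurable_const_add (l : Rd d)),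
      measurable_vadd_const := fun x => (measurable_subtype_coe.add_const x) }
  haveI : VAddInvariantMeasure (Submodule.span ℤ (Set.range ⇑b)) (Rd d) volume :=
    ⟨fun l s _ => measure_preimage_add volume (l : Rd d) s⟩
  have key := h2.setLIntegral_eq h1 g hinv
  have hmp := (measurePreserving_add_right (volume : Measure (Rd d)) c).setLIntegral_comp_preimage_emb
    (measurableEmbedding_addRight c) g ((fun y => y - c) ⁻¹' D)
  have hset : ((fun y => y + c) ⁻¹' ((fun y => y - c) ⁻¹' D)) = D := by
    ext y; simp [add_sub_cancel_right]
  rw [hset] at hmp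
  rw [aux_cellY_eq, ← hb, ← hD, ← key, ← hmp]
  simp_rw [add_comm c]

lemma aux_integral_sq_eq {s : Set (Rd d)} {h : Rd d → ℝ}
    (hm : AEStronglyMeasurable h (volume.restrict s)) :
    ∫ x in s, h x ^ 2 = (∫⁻ x in s, (‖h x‖₊ : ℝ≥0∞) ^ 2).toReal := by
  rw [integral_eq_lintegral_of_nonneg_ae (ae_of_all _ fun x => sq_nonneg (h x))
    (hm.pow 2)]
  congr 1
  apply lintegral_congr fun x => ?_
  rw [← sq_abs, ENNReal.ofReal_pow (abs_nonneg _), ← enorm_eq_nnnorm, Real.enorm_eq_ofReal_abs]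

lemma aux_lintegral_sq_lt_top {μ : Measure (Rd d)} {h : Rd d → ℝ} (hm : MemLp h 2 μ) :
    ∫⁻ x, (‖h x‖₊ : ℝ≥0∞) ^ 2 ∂μ < ∞ := by
  have h2 := hm.2
  rw [eLpNorm_eq_lintegral_rpow_enorm_toReal two_ne_zero ENNReal.ofNat_ne_top] at h2
  set X := ∫⁻ x, (‖h x‖₊ : ℝ≥0∞) ^ (ENNReal.toReal 2) ∂μ with hx
  have hXlt : X < ∞ := by
    have h3 := ENNReal.rpow_lt_top_of_nonneg (x := X ^ (1 / ENNReal.toReal 2))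
      (by norm_num : (0:ℝ) ≤ 2) h2.ne
    rwa [← ENNReal.rpow_mul, ENNReal.toReal_ofNat,
      (by norm_num : 1/(2:ℝ)*2 = 1), ENNReal.rpow_one] at h3
  rw [hx, ENNReal.toReal_ofNat] at hXlt
  simpa [ENNReal.rpow_two] using hXlt

lemma aux_sq_integral_le (v : Rd d → ℝ) (hv : Measurable v) :
    (‖∫ z in cellY d, v z‖₊ : ℝ≥0∞) ^ 2 ≤ ∫⁻ z in cellY d, (‖v z‖₊ : ℝ≥0∞) ^ 2 := by
  have h1 : (‖∫ z in cellY d, v z‖₊ : ℝ≥0∞) ≤ ∫⁻ z in cellY d, ‖v z‖₊ :=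
    enorm_integral_le_lintegral_enorm _
  have hpq : Real.HolderConjugate 2 2 := Real.HolderConjugate.two_two
  have hcs := ENNReal.lintegral_mul_le_Lp_mul_Lq (volume.restrict (cellY d)) hpq
    (f := fun z => (‖v z‖₊ : ℝ≥0∞)) (g := fun _ => 1)
    (hv.enorm.aemeasurable) aemeasurable_const
  simp only [Pi.mul_apply, mul_one, ENNReal.one_rpow, lintegral_const, Measure.restrict_apply_univ,
    aux_volume_cellY, one_mul, ENNReal.one_rpow, ENNReal.rpow_one] at hcs
  have h2 := le_trans h1 hcs
  have h3 := ENNReal.rpow_le_rpow h2 (by norm_num : (0:ℝ) ≤ 2)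
  rw [← ENNReal.rpow_mul, (by norm_num : 1/(2:ℝ)*2 = 1), ENNReal.rpow_one] at h3
  calc (‖∫ z in cellY d, v z‖₊ : ℝ≥0∞) ^ 2
      = (‖∫ z in cellY d, v z‖₊ : ℝ≥0∞) ^ (2:ℝ) := by rw [ENNReal.rpow_two]
    _ ≤ ∫⁻ z in cellY d, (‖v z‖₊ : ℝ≥0∞) ^ (2:ℝ) := h3
    _ = ∫⁻ z in cellY d, (‖v z‖₊ : ℝ≥0∞) ^ 2 := by simp [ENNReal.rpow_two]

set_option maxHeartbeats 2000000 in
/-- Proposition 2.5: for a `1`-periodic `f ∈ L²(Y)` and `u ∈ L²(ℝ^d)`,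
`‖f^ε S_ε u‖_{L²(ℝ^d)} ≤ ‖f‖_{L²(Y)} ‖u‖_{L²(ℝ^d)}`. -/
theorem steklov_smoothing_multiplication (d : ℕ) (ε : ℝ) (hε : 0 < ε)
    (f : Rd d → ℝ) (hfm : Measurable f) (hfper : ZPeriodic f)
    (hf : MemLp f 2 (volume.restrict (cellY d)))
    (u : Rd d → ℝ) (hu : MemLp u 2 (volume : Measure (Rd d))) :
    L2 univ (fun x => f (ε⁻¹ • x) * stek ε u x) ≤ L2 (cellY d) f * L2 univ u := by
  have hε' : (ε:ℝ) ≠ 0 := hε.ne'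
  -- measurable representative of u
  obtain ⟨u', hu'sm, huu'⟩ : ∃ u' : Rd d → ℝ, StronglyMeasurable u' ∧ u =ᵐ[volume] u' :=
    ⟨hu.1.mk u, hu.1.stronglyMeasurable_mk, hu.1.ae_eq_mk⟩
  have hu'm : Measurable u' := hu'sm.measurable
  have hu' : MemLp u' 2 (volume : Measure (Rd d)) :=
    ⟨hu'm.aestronglyMeasurable, by rw [← eLpNorm_congr_ae huu']; exact hu.2⟩
  -- stek of u equals stek of u' everywhere
  have hstek : ∀ x, stek ε u x = stek ε u' x := by
    intro x
    have hq1 : Measure.QuasiMeasurePreserving (fun z : Rd d => ε • z) volume volume :=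
      Measure.quasiMeasurePreserving_smul (volume : Measure (Rd d)) hε'
    have hq2 : MeasurePreserving (fun w : Rd d => x - w) volume volume := by
      have h := (measurePreserving_add_left (volume : Measure (Rd d)) x).comp
        (Measure.measurePreserving_neg (volume : Measure (Rd d)))
      simpa [Function.comp_def, sub_eq_add_neg] using h
    have hq : Measure.QuasiMeasurePreserving (fun z : Rd d => x - ε • z) volume volume := by
      have h := hq2.quasiMeasurePreserving.comp hq1
      simpa [Function.comp_def] using h
    refine integral_congr_ae (ae_restrict_of_ae ?_)
    have h := hq.ae_eq_comp huu'
    simpa [Function.comp_def, Filter.EventuallyEq] using h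
  -- measurability facts
  have hUm : Measurable fun y : Rd d => (‖u' y‖₊ : ℝ≥0∞) ^ 2 :=
    (hu'm.nnnorm.coe_nnreal_ennreal).pow_const 2
  have hFm : Measurable fun y : Rd d => (‖f y‖₊ : ℝ≥0∞) ^ 2 :=
    (hfm.nnnorm.coe_nnreal_ennreal).pow_const 2
  have hFper : ∀ (y : Rd d) (z : Fin d → ℤ),
      (‖f (y + (WithLp.equiv 2 (Fin d → ℝ)).symm fun i => ((z i : ℤ) : ℝ))‖₊ : ℝ≥0∞) ^ 2
        = (‖f y‖₊ : ℝ≥0∞) ^ 2 := by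
    intro y z; rw [hfper y z]
  have hsm : StronglyMeasurable (stek ε u') := by
    have h : StronglyMeasurable fun p : Rd d × Rd d => u' (p.1 - ε • p.2) :=
      (hu'm.comp (measurable_fst.sub (measurable_snd.const_smul ε))).stronglyMeasurable
    exact h.integral_prod_right'
  -- main estimate at the level of lintegrals
  have main : ∫⁻ x, (‖f (ε⁻¹ • x)‖₊ : ℝ≥0∞) ^ 2 * (‖stek ε u' x‖₊ : ℝ≥0∞) ^ 2
      ≤ (∫⁻ y in cellY d, (‖f y‖₊ : ℝ≥0∞) ^ 2) * ∫⁻ y, (‖u' y‖₊ : ℝ≥0∞) ^ 2 := by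
    calc ∫⁻ x, (‖f (ε⁻¹ • x)‖₊ : ℝ≥0∞) ^ 2 * (‖stek ε u' x‖₊ : ℝ≥0∞) ^ 2
        ≤ ∫⁻ x, (‖f (ε⁻¹ • x)‖₊ : ℝ≥0∞) ^ 2 * ∫⁻ z in cellY d, (‖u' (x - ε • z)‖₊ : ℝ≥0∞) ^ 2 := by
          refine lintegral_mono fun x => mul_le_mul_right ?_ _
          exact aux_sq_integral_le _ (hu'm.comp (measurable_const.sub (measurable_id.const_smul ε)))
      _ = ∫⁻ x, ∫⁻ z in cellY d, (‖f (ε⁻¹ • x)‖₊ : ℝ≥0∞) ^ 2 * (‖u' (x - ε • z)‖₊ : ℝ≥0∞) ^ 2 := by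
          refine lintegral_congr fun x => (lintegral_const_mul _ ?_).symm
          exact hUm.comp (measurable_const.sub (measurable_id.const_smul ε))
      _ = ∫⁻ z in cellY d, ∫⁻ x, (‖f (ε⁻¹ • x)‖₊ : ℝ≥0∞) ^ 2 * (‖u' (x - ε • z)‖₊ : ℝ≥0∞) ^ 2 := by
          refine lintegral_lintegral_swap ?_
          exact ((hFm.comp (measurable_fst.const_smul ε⁻¹)).mul
            (hUm.comp (measurable_fst.sub (measurable_snd.const_smul ε)))).aemeasurable
      _ = ∫⁻ z in cellY d, ∫⁻ x, (‖f (ε⁻¹ • x + z)‖₊ : ℝ≥0∞) ^ 2 * (‖u' x‖₊ : ℝ≥0∞) ^ 2 := by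
          refine lintegral_congr fun z => ?_
          rw [← lintegral_add_right_eq_self
            (fun x => (‖f (ε⁻¹ • x)‖₊ : ℝ≥0∞) ^ 2 * (‖u' (x - ε • z)‖₊ : ℝ≥0∞) ^ 2) (ε • z)]
          refine lintegral_congr fun x => ?_
          have h1 : ε⁻¹ • (x + ε • z) = ε⁻¹ • x + z := by
            rw [smul_add, smul_smul, inv_mul_cancel₀ hε', one_smul]
          have h2 : x + ε • z - ε • z = x := add_sub_cancel_right _ _
          rw [h1, h2]
      _ = ∫⁻ x, ∫⁻ z in cellY d, (‖f (ε⁻¹ • x + z)‖₊ : ℝ≥0∞) ^ 2 * (‖u' x‖₊ : ℝ≥0∞) ^ 2 := by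
          refine lintegral_lintegral_swap (μ := volume.restrict (cellY d)) (ν := volume)
            (f := fun z x => (‖f (ε⁻¹ • x + z)‖₊ : ℝ≥0∞) ^ 2 * (‖u' x‖₊ : ℝ≥0∞) ^ 2) ?_
          exact ((hFm.comp ((measurable_snd.const_smul ε⁻¹).add measurable_fst)).mul
            (hUm.comp measurable_snd)).aemeasurable
      _ = ∫⁻ x, (‖u' x‖₊ : ℝ≥0∞) ^ 2 * ∫⁻ y in cellY d, (‖f y‖₊ : ℝ≥0∞) ^ 2 := by
          refine lintegral_congr fun x => ?_
          rw [lintegral_mul_const ((‖u' x‖₊ : ℝ≥0∞) ^ 2)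
            (f := fun z => (‖f (ε⁻¹ • x + z)‖₊ : ℝ≥0∞) ^ 2)
            (hFm.comp (measurable_const_add (ε⁻¹ • x)))]
          rw [aux_periodic_setLIntegral (fun y => (‖f y‖₊ : ℝ≥0∞) ^ 2) hFper (ε⁻¹ • x), mul_comm]
      _ = (∫⁻ y in cellY d, (‖f y‖₊ : ℝ≥0∞) ^ 2) * ∫⁻ y, (‖u' y‖₊ : ℝ≥0∞) ^ 2 := by
          rw [lintegral_mul_const _ hUm, mul_comm]
  -- finiteness
  have hBlt : (∫⁻ y in cellY d, (‖f y‖₊ : ℝ≥0∞) ^ 2) ≠ ∞ := (aux_lintegral_sq_lt_top hf).ne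
  have hClt : (∫⁻ y, (‖u' y‖₊ : ℝ≥0∞) ^ 2) ≠ ∞ := (aux_lintegral_sq_lt_top hu').ne
  -- rewrite the three L2 norms
  have hL : L2 univ (fun x => f (ε⁻¹ • x) * stek ε u x)
      = (∫⁻ x, (‖f (ε⁻¹ • x)‖₊ : ℝ≥0∞) ^ 2 * (‖stek ε u' x‖₊ : ℝ≥0∞) ^ 2).toReal ^ (1/2 : ℝ) := by
    rw [L2]
    simp only [hstek]
    rw [aux_integral_sq_eq (h := fun x => f (ε⁻¹ • x) * stek ε u' x)
      (((hfm.comp (measurable_const_smul ε⁻¹)).mul hsm.measurable).aestronglyMeasurable)]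
    rw [Measure.restrict_univ]
    congr 2
    refine lintegral_congr fun x => ?_
    rw [nnnorm_mul, ENNReal.coe_mul, mul_pow]
  have hR1 : L2 (cellY d) f = (∫⁻ y in cellY d, (‖f y‖₊ : ℝ≥0∞) ^ 2).toReal ^ (1/2 : ℝ) := by
    rw [L2, aux_integral_sq_eq hfm.aestronglyMeasurable]
  have hR2 : L2 univ u = (∫⁻ y, (‖u' y‖₊ : ℝ≥0∞) ^ 2).toReal ^ (1/2 : ℝ) := by
    rw [L2, show (∫ x in univ, u x ^ 2) = ∫ x in univ, u' x ^ 2 from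
      integral_congr_ae (ae_restrict_of_ae (huu'.mono fun x h => by simp only [h]))]
    rw [aux_integral_sq_eq hu'm.aestronglyMeasurable, Measure.restrict_univ]
  rw [hL, hR1, hR2]
  have h1 : (∫⁻ x, (‖f (ε⁻¹ • x)‖₊ : ℝ≥0∞) ^ 2 * (‖stek ε u' x‖₊ : ℝ≥0∞) ^ 2).toReal
      ≤ (∫⁻ y in cellY d, (‖f y‖₊ : ℝ≥0∞) ^ 2).toReal * (∫⁻ y, (‖u' y‖₊ : ℝ≥0∞) ^ 2).toReal := by
    rw [← ENNReal.toReal_mul]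
    exact ENNReal.toReal_mono (ENNReal.mul_ne_top hBlt hClt) main
  calc (∫⁻ x, (‖f (ε⁻¹ • x)‖₊ : ℝ≥0∞) ^ 2 * (‖stek ε u' x‖₊ : ℝ≥0∞) ^ 2).toReal ^ (1/2:ℝ)
      ≤ ((∫⁻ y in cellY d, (‖f y‖₊ : ℝ≥0∞) ^ 2).toReal
          * (∫⁻ y, (‖u' y‖₊ : ℝ≥0∞) ^ 2).toReal) ^ (1/2:ℝ) :=
        Real.rpow_le_rpow ENNReal.toReal_nonneg h1 (by norm_num)
    _ = (∫⁻ y in cellY d, (‖f y‖₊ : ℝ≥0∞) ^ 2).toReal ^ (1/2:ℝ)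
          * (∫⁻ y, (‖u' y‖₊ : ℝ≥0∞) ^ 2).toReal ^ (1/2:ℝ) :=
        Real.mul_rpow ENNReal.toReal_nonneg ENNReal.toReal_nonneg
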